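/- Consider assigning k active users out of n total users into b ≥ k distinct slots (an injective map from the k active users to [b]). Any deterministic encoder that communicates, via a common message T, each active user's own slot to it (with each user decoding only from T and its own identity) satisfies H(T) ≥ k log₂ b − log₂(n^k / n^{\underline{k}}), where the schedule is uniformly random over all C(n,k)·C(b,k)·k! choices of active set and injective assignment. -/

import Mathlib

lemma aux_pow_ineq (k : ℕ) (u : ℝ) (hu : 0 ≤ u) : (k + 1 : ℝ) * u ^ k ≤ 1 + k * u ^ (k + 1) := by
  induction k with
  | zero => simp
  | succ j ih =>
    have h1 : (j + 1 : ℝ) * u ^ (j + 1) ≤ u + j * u ^ (j + 2) := by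
      calc (j + 1 : ℝ) * u ^ (j + 1) = ((j + 1 : ℝ) * u ^ j) * u := by ring
        _ ≤ (1 + j * u ^ (j + 1)) * u := mul_le_mul_of_nonneg_right ih hu
        _ = u + j * u ^ (j + 2) := by ring
    have h2 : u + u ^ (j + 1) ≤ 1 + u ^ (j + 2) := by
      have expand : (1 - u) * (1 - u ^ (j + 1)) = 1 - u - u ^ (j + 1) + u ^ (j + 2) := by ring
      rcases le_total u 1 with h | h
      · have h3 : u ^ (j + 1) ≤ 1 := pow_le_one₀ hu h
        have h4 := mul_nonneg (sub_nonneg.2 h) (sub_nonneg.2 h3)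
        rw [expand] at h4; linarith
      · have h3 : (1:ℝ) ≤ u ^ (j + 1) := one_le_pow₀ h
        have h4 := mul_nonneg (sub_nonneg.2 h3) (sub_nonneg.2 h)
        have h4' : 0 ≤ 1 - u - u ^ (j + 1) + u ^ (j + 2) := by linear_combination h4
        linarith
    have key : ((j:ℝ) + 1 + 1) * u ^ (j + 1) ≤ 1 + ((j:ℝ) + 1) * u ^ (j + 2) := by linarith
    push_cast
    convert key using 2 <;> ring

lemma aux_step (m j : ℕ) (y t : ℝ) (hy : 0 ≤ y) (ht : 0 ≤ t) :
    (Nat.choose m (j + 1) : ℝ) * y ^ (j + 1) + t * (Nat.choose m j : ℝ) * y ^ j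
      ≤ (Nat.choose (m + 1) (j + 1) : ℝ) * (((m : ℝ) * y + t) / ((m : ℝ) + 1)) ^ (j + 1) := by
  have hmy0 : 0 ≤ (m : ℝ) * y := by positivity
  by_cases hjm : j ≤ m
  case neg =>
    have c1 : Nat.choose m (j + 1) = 0 := Nat.choose_eq_zero_of_lt (by omega)
    have c0 : Nat.choose m j = 0 := Nat.choose_eq_zero_of_lt (by omega)
    rw [c1, c0]
    push_cast
    have : (0:ℝ) ≤ (Nat.choose (m + 1) (j + 1) : ℝ) * (((m : ℝ) * y + t) / ((m : ℝ) + 1)) ^ (j + 1) := by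
      apply mul_nonneg (by positivity)
      apply pow_nonneg; positivity
    linarith
  case pos =>
    rcases eq_or_lt_of_le (show (0:ℝ) ≤ (m : ℝ) * y + t by positivity) with hsz | hsp
    · -- degenerate: m*y + t = 0
      have htz0 : t = 0 := by linarith
      have hmy : (m : ℝ) * y = 0 := by linarith
      have hfirst : (Nat.choose m (j + 1) : ℝ) * y ^ (j + 1) = 0 := by
        rcases Nat.eq_zero_or_pos m with hm | hm
        · subst hm; rw [Nat.choose_eq_zero_of_lt (by omega)]; simp
        · rcases mul_eq_zero.1 hmy with h | h
          · exact absurd h (Nat.cast_ne_zero.2 (by omega))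
          · rw [h]; simp
      have h1 : (m:ℝ) * y + t = 0 := hsz.symm
      rw [h1, htz0, hfirst]
      simp
    · -- main case
      have hb : (0:ℝ) < (m : ℝ) + 1 := by positivity
      obtain ⟨z, hz⟩ : ∃ z : ℝ, z = ((m : ℝ) * y + t) / ((m : ℝ) + 1) := ⟨_, rfl⟩
      have hzpos : 0 < z := hz ▸ div_pos hsp hb
      obtain ⟨u, hu⟩ : ∃ u : ℝ, u = y / z := ⟨_, rfl⟩
      have hu0 : 0 ≤ u := by rw [hu]; positivity
      have hyz : y = u * z := by rw [hu]; field_simp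
      have hzt : z * ((m : ℝ) + 1) = (m : ℝ) * y + t := by rw [hz]; field_simp
      rw [← hz]
      have htz : t = z * (((m : ℝ) + 1) - m * u) := by linear_combination -hzt - (m:ℝ) * hyz
      have idA : ((j : ℝ) + 1) * (Nat.choose (m + 1) (j + 1) : ℝ) = ((m : ℝ) + 1) * (Nat.choose m j : ℝ) := by
        have h := congrArg (Nat.cast (R := ℝ)) (Nat.add_one_mul_choose_eq m j)
        push_cast at h
        linarith
      have idB : ((j : ℝ) + 1) * (Nat.choose m (j + 1) : ℝ) = ((m : ℝ) - j) * (Nat.choose m j : ℝ) := by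
        have h := congrArg (Nat.cast (R := ℝ)) (Nat.choose_succ_right_eq m j)
        push_cast [Nat.cast_sub hjm] at h
        linarith
      have key : ((j : ℝ) + 1) * u ^ j - j * u ^ (j + 1) ≤ 1 := by
        have := aux_pow_ineq j u hu0
        linarith
      have hbr : (Nat.choose m (j + 1) : ℝ) * u ^ (j + 1) + (((m : ℝ) + 1) - m * u) * (Nat.choose m j : ℝ) * u ^ j
          ≤ (Nat.choose (m + 1) (j + 1) : ℝ) := by
        have h1 : ((j : ℝ) + 1) * ((Nat.choose m (j + 1) : ℝ) * u ^ (j + 1) + (((m : ℝ) + 1) - m * u) * (Nat.choose m j : ℝ) * u ^ j)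
            = ((m : ℝ) + 1) * (Nat.choose m j : ℝ) * (((j : ℝ) + 1) * u ^ j - j * u ^ (j + 1)) := by
          linear_combination (u ^ (j + 1)) * idB
        have h2 : ((m : ℝ) + 1) * (Nat.choose m j : ℝ) * (((j : ℝ) + 1) * u ^ j - j * u ^ (j + 1))
            ≤ ((m : ℝ) + 1) * (Nat.choose m j : ℝ) * 1 :=
          mul_le_mul_of_nonneg_left key (by positivity)
        have hj1 : (0:ℝ) < (j : ℝ) + 1 := by positivity
        have h3 : ((j : ℝ) + 1) * ((Nat.choose m (j + 1) : ℝ) * u ^ (j + 1) + (((m : ℝ) + 1) - m * u) * (Nat.choose m j : ℝ) * u ^ j)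
            ≤ ((j : ℝ) + 1) * (Nat.choose (m + 1) (j + 1) : ℝ) := by
          rw [h1]; linarith [idA]
        exact le_of_mul_le_mul_left h3 hj1
      rw [hyz, htz]
      calc (Nat.choose m (j + 1) : ℝ) * (u * z) ^ (j + 1) + z * (((m : ℝ) + 1) - m * u) * (Nat.choose m j : ℝ) * (u * z) ^ j
          = ((Nat.choose m (j + 1) : ℝ) * u ^ (j + 1) + (((m : ℝ) + 1) - m * u) * (Nat.choose m j : ℝ) * u ^ j) * z ^ (j + 1) := by
            ring
        _ ≤ (Nat.choose (m + 1) (j + 1) : ℝ) * z ^ (j + 1) :=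
            mul_le_mul_of_nonneg_right hbr (by positivity)

lemma aux_maclaurin {ι : Type*} [DecidableEq ι] (s : Finset ι) (v : ι → ℝ)
    (hv : ∀ i ∈ s, 0 ≤ v i) (k : ℕ) :
    ∑ W ∈ s.powersetCard k, ∏ i ∈ W, v i
      ≤ (s.card.choose k : ℝ) * ((∑ i ∈ s, v i) / s.card) ^ k := by
  induction s using Finset.induction_on generalizing k with
  | empty =>
    cases k with
    | zero => simp
    | succ j =>
      have : Finset.powersetCard (j + 1) (∅ : Finset ι) = ∅ := by
        ext W
        simp only [Finset.mem_powersetCard, Finset.subset_empty, Finset.notMem_empty,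
          iff_false, not_and]
        rintro rfl
        simp
      simp [this]
  | insert a s ha ih =>
    have hva : 0 ≤ v a := hv a (Finset.mem_insert_self a s)
    have hvs : ∀ i ∈ s, 0 ≤ v i := fun i hi => hv i (Finset.mem_insert_of_mem hi)
    cases k with
    | zero => simp
    | succ j =>
      have hdisj : Disjoint (s.powersetCard (j + 1)) ((s.powersetCard j).image (insert a)) := by
        rw [Finset.disjoint_left]
        intro W hW hW'
        obtain ⟨W', hW', rfl⟩ := Finset.mem_image.1 hW'
        have hsub := (Finset.mem_powersetCard.1 hW).1
        exact ha (hsub (Finset.mem_insert_self a W'))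
      have hinj : ∀ W ∈ s.powersetCard j, ∀ W' ∈ s.powersetCard j,
          insert a W = insert a W' → W = W' := by
        intro W hW W' hW' h
        have haW : a ∉ W := fun h' => ha ((Finset.mem_powersetCard.1 hW).1 h')
        have haW' : a ∉ W' := fun h' => ha ((Finset.mem_powersetCard.1 hW').1 h')
        rw [← Finset.erase_insert haW, ← Finset.erase_insert haW', h]
      rw [Finset.powersetCard_succ_insert ha, Finset.sum_union hdisj, Finset.sum_image hinj]
      have hprodins : ∀ W ∈ s.powersetCard j, ∏ i ∈ insert a W, v i = v a * ∏ i ∈ W, v i := by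
        intro W hW
        have haW : a ∉ W := fun h' => ha ((Finset.mem_powersetCard.1 hW).1 h')
        exact Finset.prod_insert haW
      rw [Finset.sum_congr rfl hprodins, ← Finset.mul_sum]
      have hy : 0 ≤ (∑ i ∈ s, v i) / (s.card : ℝ) :=
        div_nonneg (Finset.sum_nonneg hvs) (Nat.cast_nonneg _)
      have hmy : (s.card : ℝ) * ((∑ i ∈ s, v i) / (s.card : ℝ)) = ∑ i ∈ s, v i := by
        rcases Finset.eq_empty_or_nonempty s with h0 | h0
        · simp [h0]
        · have : (s.card : ℝ) ≠ 0 := Nat.cast_ne_zero.2 (Finset.card_ne_zero_of_mem h0.choose_spec)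
          field_simp
      have step := aux_step s.card j ((∑ i ∈ s, v i) / (s.card : ℝ)) (v a) hy hva
      rw [hmy] at step
      have hcard : (insert a s).card = s.card + 1 := Finset.card_insert_of_notMem ha
      rw [hcard, Finset.sum_insert ha]
      have hfin : ((s.card + 1 : ℕ) : ℝ) = (s.card : ℝ) + 1 := by push_cast; ring
      rw [hfin, add_comm (v a) (∑ i ∈ s, v i)]
      have h1 := add_le_add (ih hvs (j + 1)) (mul_le_mul_of_nonneg_left (ih hvs j) hva)
      linarith [h1, step]

def instOf (n b k : ℕ) (p : {S : Finset (Fin n) // S.card = k} × (Fin k ↪ Fin b)) :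
    Fin n → Option (Fin b) :=
  fun u => if h : u ∈ p.1.1 then some (p.2 ((p.1.1.orderIsoOfFin p.1.2).symm ⟨u, h⟩)) else none

lemma aux_lower (n b k : ℕ)
    (Inst : Finset (Fin n → Option (Fin b)))
    (hmem : ∀ x : Fin n → Option (Fin b), x ∈ Inst ↔
      ((Finset.univ.filter fun u => (x u).isSome).card = k ∧
        ∀ u v : Fin n, ∀ w : Fin b, x u = some w → x v = some w → u = v)) :
    n.choose k * b.descFactorial k ≤ Inst.card := by
  classical
  have hΦval : ∀ (p : {S : Finset (Fin n) // S.card = k} × (Fin k ↪ Fin b)) (u : Fin n)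
      (h : u ∈ p.1.1), instOf n b k p u = some (p.2 ((p.1.1.orderIsoOfFin p.1.2).symm ⟨u, h⟩)) :=
    fun p u h => dif_pos h
  have hΦnone : ∀ p (u : Fin n), u ∉ p.1.1 → instOf n b k p u = none :=
    fun p u h => dif_neg h
  have hsupp : ∀ p, (Finset.univ.filter fun u => (instOf n b k p u).isSome) = p.1.1 := by
    intro p; ext u
    by_cases h : u ∈ p.1.1
    · simp [hΦval p u h, h]
    · simp [hΦnone p u h, h]
  have hΦmem : ∀ p, instOf n b k p ∈ Inst := by
    intro p
    rw [hmem]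
    refine ⟨by rw [hsupp p]; exact p.1.2, ?_⟩
    intro u v w hu hv
    have hu' : u ∈ p.1.1 := by
      by_contra h; rw [hΦnone p u h] at hu; exact Option.some_ne_none w hu.symm
    have hv' : v ∈ p.1.1 := by
      by_contra h; rw [hΦnone p v h] at hv; exact Option.some_ne_none w hv.symm
    rw [hΦval p u hu'] at hu
    rw [hΦval p v hv'] at hv
    have h3 := p.2.injective ((Option.some.inj hu).trans (Option.some.inj hv).symm)
    have h4 := (p.1.1.orderIsoOfFin p.1.2).symm.injective h3
    exact congrArg Subtype.val h4
  have hΦinj : Function.Injective (instOf n b k) := by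
    intro p q h
    obtain ⟨⟨S, hS1⟩, e⟩ := p
    obtain ⟨⟨S', hS1'⟩, e'⟩ := q
    have hS : S = S' := by
      have := hsupp (⟨⟨S, hS1⟩, e⟩ : {S : Finset (Fin n) // S.card = k} × (Fin k ↪ Fin b))
      have h2 := hsupp (⟨⟨S', hS1'⟩, e'⟩ : {S : Finset (Fin n) // S.card = k} × (Fin k ↪ Fin b))
      simp only at this h2
      rw [← this, ← h2, h]
    subst hS
    have hpr : hS1 = hS1' := rfl
    subst hpr
    suffices he : e = e' by rw [he]
    apply Function.Embedding.ext
    intro i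
    have hu : (↑((S.orderIsoOfFin hS1) i) : Fin n) ∈ S := ((S.orderIsoOfFin hS1) i).2
    have h1 := congrFun h ((S.orderIsoOfFin hS1) i : Fin n)
    rw [hΦval _ _ hu, hΦval _ _ hu] at h1
    have h2 := Option.some.inj h1
    have h3 : (S.orderIsoOfFin hS1).symm ⟨((S.orderIsoOfFin hS1) i : Fin n), hu⟩ = i := by
      rw [show (⟨((S.orderIsoOfFin hS1) i : Fin n), hu⟩ : {x // x ∈ S}) = (S.orderIsoOfFin hS1) i from rfl]
      exact OrderIso.symm_apply_apply _ _
    rw [h3] at h2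
    exact h2
  calc n.choose k * b.descFactorial k
      = Fintype.card ({S : Finset (Fin n) // S.card = k} × (Fin k ↪ Fin b)) := by
        simp [Fintype.card_prod, Fintype.card_finset_len, Fintype.card_embedding_eq]
    _ = (Finset.univ : Finset ({S : Finset (Fin n) // S.card = k} × (Fin k ↪ Fin b))).card :=
        Finset.card_univ.symm
    _ ≤ Inst.card :=
        Finset.card_le_card_of_injOn (instOf n b k) (fun p _ => hΦmem p) hΦinj.injOn

open scoped Classical in
lemma aux_upper (n b k : ℕ)
    (Inst : Finset (Fin n → Option (Fin b)))
    (hmem : ∀ x : Fin n → Option (Fin b), x ∈ Inst ↔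
      ((Finset.univ.filter fun u => (x u).isSome).card = k ∧
        ∀ u v : Fin n, ∀ w : Fin b, x u = some w → x v = some w → u = v))
    (f : (Fin n → Option (Fin b)) → ℕ)
    (dec : Fin n → ℕ → Fin b)
    (hcorrect : ∀ x ∈ Inst, ∀ u : Fin n, ∀ w : Fin b, x u = some w → dec u (f x) = w)
    (t : ℕ) :
    ((Inst.filter fun x => f x = t).card : ℝ) ≤ (b.choose k : ℝ) * ((n : ℝ) / b) ^ k := by
  classical
  set g : Fin n → Fin b := fun u => dec u t with hg
  set v : Fin b → ℕ := fun w => (Finset.univ.filter fun u => g u = w).card with hv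
  set supp : (Fin n → Option (Fin b)) → Finset (Fin n) :=
    fun x => Finset.univ.filter fun u => (x u).isSome with hsupp
  -- basic facts about members of the fiber
  have hxfacts : ∀ x ∈ Inst.filter (fun x => f x = t),
      (∀ u ∈ supp x, x u = some (g u)) ∧ (supp x).card = k ∧
      (∀ u₁ ∈ supp x, ∀ u₂ ∈ supp x, g u₁ = g u₂ → u₁ = u₂) := by
    intro x hx
    obtain ⟨hxI, hft⟩ := Finset.mem_filter.1 hx
    have hsome : ∀ u ∈ supp x, x u = some (g u) := by
      intro u hu
      have h1 : (x u).isSome := (Finset.mem_filter.1 hu).2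
      obtain ⟨w, hw⟩ := Option.isSome_iff_exists.1 h1
      have := hcorrect x hxI u w hw
      rw [hft] at this
      rw [hw]; exact congrArg some this.symm
    refine ⟨hsome, ((hmem x).1 hxI).1, ?_⟩
    intro u₁ h1 u₂ h2 hgu
    exact ((hmem x).1 hxI).2 u₁ u₂ (g u₂) (hgu ▸ hsome u₁ h1) (hsome u₂ h2)
  have hWcard : ∀ x ∈ Inst.filter (fun x => f x = t), ((supp x).image g).card = k := by
    intro x hx
    obtain ⟨_, hc, hinj⟩ := hxfacts x hx
    rw [Finset.card_image_of_injOn (fun u₁ h1 u₂ h2 => hinj u₁ h1 u₂ h2), hc]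
  have huniq : ∀ x ∈ Inst.filter (fun x => f x = t), ∀ w ∈ (supp x).image g,
      ∃! u, u ∈ supp x ∧ g u = w := by
    intro x hx w hw
    obtain ⟨_, _, hinj⟩ := hxfacts x hx
    obtain ⟨u, hu, rfl⟩ := Finset.mem_image.1 hw
    exact ⟨u, ⟨hu, rfl⟩, fun u' ⟨hu', he⟩ => hinj u' hu' u hu he⟩
  -- the injection
  let Ω := Σ W : {W : Finset (Fin b) // W.card = k},
    ∀ w : {w // w ∈ W.1}, {u : Fin n // g u = w.1}
  let φ : {x // x ∈ Inst.filter (fun x => f x = t)} → Ω := fun x =>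
    ⟨⟨(supp x.1).image g, hWcard x.1 x.2⟩,
      fun w => ⟨(supp x.1).choose (fun u => g u = w.1) (huniq x.1 x.2 w.1 w.2),
        Finset.choose_property (fun u => g u = w.1) (supp x.1) (huniq x.1 x.2 w.1 w.2)⟩⟩
  let ψ : Ω → (Fin n → Option (Fin b)) := fun q u =>
    if (∃ w : {w // w ∈ q.1.1}, (q.2 w : Fin n) = u) then some (g u) else none
  have hrecon : ∀ x (hx : x ∈ Inst.filter (fun x => f x = t)), ψ (φ ⟨x, hx⟩) = x := by
    intro x hx
    obtain ⟨hsome, hc, hinj⟩ := hxfacts x hx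
    funext u
    by_cases hu : u ∈ supp x
    · have hw : g u ∈ (supp x).image g := Finset.mem_image_of_mem g hu
      have hch : (supp x).choose (fun u' => g u' = g u) (huniq x hx (g u) hw) = u := by
        have h1 := Finset.choose_mem (fun u' => g u' = g u) (supp x) (huniq x hx (g u) hw)
        have h2 := Finset.choose_property (fun u' => g u' = g u) (supp x) (huniq x hx (g u) hw)
        exact hinj _ h1 u hu h2
      have hex : ∃ w : {w // w ∈ ((φ ⟨x, hx⟩).1 : {W : Finset (Fin b) // W.card = k}).1},
          ((φ ⟨x, hx⟩).2 w : Fin n) = u := ⟨⟨g u, hw⟩, hch⟩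
      show (if _ then _ else _) = x u
      rw [if_pos hex]
      exact (hsome u hu).symm
    · have hnex : ¬ ∃ w : {w // w ∈ ((φ ⟨x, hx⟩).1 : {W : Finset (Fin b) // W.card = k}).1},
          ((φ ⟨x, hx⟩).2 w : Fin n) = u := by
        rintro ⟨w, hwu⟩
        have h2 : (↑((φ ⟨x, hx⟩).snd w) : Fin n) ∈ supp x :=
          Finset.choose_mem (fun u' => g u' = w.1) (supp x) (huniq x hx w.1 w.2)
        rw [hwu] at h2
        exact hu h2
      show (if _ then _ else _) = x u
      rw [if_neg hnex]
      have : ¬ (x u).isSome := by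
        intro h; exact hu (Finset.mem_filter.2 ⟨Finset.mem_univ u, h⟩)
      exact (Option.not_isSome_iff_eq_none.1 this).symm
  have hφinj : Function.Injective φ := by
    intro x y h
    apply Subtype.ext
    rw [← hrecon x.1 x.2, ← hrecon y.1 y.2]
    exact congrArg ψ (by rw [show φ ⟨x.1, x.2⟩ = φ x from rfl, show φ ⟨y.1, y.2⟩ = φ y from rfl, h])
  -- cardinality chain
  have hcard1 : (Inst.filter fun x => f x = t).card ≤ Fintype.card Ω := by
    rw [← Fintype.card_coe (Inst.filter fun x => f x = t)]
    exact Fintype.card_le_of_injective φ hφinj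
  have hcard2 : Fintype.card Ω = ∑ W ∈ (Finset.univ : Finset (Fin b)).powersetCard k,
      ∏ w ∈ W, v w := by
    rw [Fintype.card_sigma]
    have h1 : ∀ W : {W : Finset (Fin b) // W.card = k},
        Fintype.card (∀ w : {w // w ∈ W.1}, {u : Fin n // g u = w.1}) = ∏ w ∈ W.1, v w := by
      intro W
      rw [Fintype.card_pi]
      have : ∀ w : {w // w ∈ W.1}, Fintype.card {u : Fin n // g u = w.1} = v w.1 := by
        intro w
        rw [Fintype.card_subtype]
      rw [Finset.prod_congr rfl fun w _ => this w]
      exact Finset.prod_coe_sort W.1 v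
    rw [Finset.sum_congr rfl fun W _ => h1 W]
    exact (Finset.sum_subtype (Finset.powersetCard k Finset.univ)
      (fun W => Finset.mem_powersetCard_univ) (fun W => ∏ w ∈ W, v w)).symm
  have hsumv : ∑ w : Fin b, (v w : ℝ) = n := by
    have := Finset.card_eq_sum_card_fiberwise
      (f := g) (s := (Finset.univ : Finset (Fin n))) (t := (Finset.univ : Finset (Fin b)))
      (fun u _ => Finset.mem_univ (g u))
    rw [Finset.card_univ, Fintype.card_fin] at this
    exact_mod_cast congrArg (Nat.cast (R := ℝ)) this.symm
  calc ((Inst.filter fun x => f x = t).card : ℝ)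
      ≤ (Fintype.card Ω : ℝ) := by exact_mod_cast hcard1
    _ = ∑ W ∈ (Finset.univ : Finset (Fin b)).powersetCard k, ∏ w ∈ W, (v w : ℝ) := by
        rw [hcard2]; push_cast; rfl
    _ ≤ ((Finset.univ : Finset (Fin b)).card.choose k : ℝ)
        * ((∑ w : Fin b, (v w : ℝ)) / (Finset.univ : Finset (Fin b)).card) ^ k :=
        aux_maclaurin _ _ (fun i _ => Nat.cast_nonneg _) k
    _ = (b.choose k : ℝ) * ((n : ℝ) / b) ^ k := by
        rw [hsumv, Finset.card_univ, Fintype.card_fin]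

open scoped Classical in
theorem stmt18 (n b k : ℕ) (hk : 0 < k) (hkn : k ≤ n) (hkb : k ≤ b)
    (Inst : Finset (Fin n → Option (Fin b)))
    (hInst : Inst = Finset.univ.filter fun x =>
      (Finset.univ.filter fun u => (x u).isSome).card = k ∧
      ∀ u v : Fin n, ∀ w : Fin b, x u = some w → x v = some w → u = v)
    (f : (Fin n → Option (Fin b)) → ℕ)
    (dec : Fin n → ℕ → Fin b)
    (hcorrect : ∀ x ∈ Inst, ∀ u : Fin n, ∀ w : Fin b, x u = some w → dec u (f x) = w) :
    (k : ℝ) * Real.logb 2 b - Real.logb 2 ((n : ℝ) ^ k / (n.descFactorial k : ℝ)) ≤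
      -∑' t : ℕ, ((Inst.filter fun x => f x = t).card / Inst.card : ℝ) *
        Real.logb 2 ((Inst.filter fun x => f x = t).card / Inst.card : ℝ) := by
  classical
  have hmem : ∀ x : Fin n → Option (Fin b), x ∈ Inst ↔
      ((Finset.univ.filter fun u => (x u).isSome).card = k ∧
        ∀ u v : Fin n, ∀ w : Fin b, x u = some w → x v = some w → u = v) := by
    intro x; rw [hInst]; simp
  have hn : 0 < n := lt_of_lt_of_le hk hkn
  have hb : 0 < b := lt_of_lt_of_le hk hkb
  have hbR : (0:ℝ) < b := by exact_mod_cast hb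
  have hnR : (0:ℝ) < n := by exact_mod_cast hn
  have hchoosebk : 0 < b.choose k := Nat.choose_pos hkb
  have hdesc : 0 < n.descFactorial k := Nat.pos_of_ne_zero (fun h => by
    rw [Nat.descFactorial_eq_zero_iff_lt] at h; omega)
  have hdescR : (0:ℝ) < (n.descFactorial k : ℝ) := by exact_mod_cast hdesc
  have hlow := aux_lower n b k Inst hmem
  have hup := aux_upper n b k Inst hmem f dec hcorrect
  have hN0 : 0 < n.choose k * b.descFactorial k :=
    Nat.mul_pos (Nat.choose_pos hkn) (Nat.pos_of_ne_zero (fun h => by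
      rw [Nat.descFactorial_eq_zero_iff_lt] at h; omega))
  have hNpos : 0 < Inst.card := lt_of_lt_of_le hN0 hlow
  have hNR : (0:ℝ) < (Inst.card : ℝ) := by exact_mod_cast hNpos
  set M : ℝ := (b.choose k : ℝ) * ((n : ℝ) / b) ^ k with hM
  have hMpos : 0 < M := by
    rw [hM]; positivity
  set N : ℝ := (Inst.card : ℝ) with hN
  set c : ℝ := Real.logb 2 (N / M) with hc
  set S : Finset ℕ := Inst.image f with hS
  have hzero : ∀ t ∉ S, (Inst.filter fun x => f x = t) = ∅ := by
    intro t ht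
    rw [Finset.filter_eq_empty_iff]
    intro x hx h
    exact ht (h ▸ Finset.mem_image_of_mem f hx)
  -- abbreviate the summand
  have htsum : (∑' t : ℕ, ((Inst.filter fun x => f x = t).card / Inst.card : ℝ) *
        Real.logb 2 ((Inst.filter fun x => f x = t).card / Inst.card : ℝ))
      = ∑ t ∈ S, ((Inst.filter fun x => f x = t).card / Inst.card : ℝ) *
        Real.logb 2 ((Inst.filter fun x => f x = t).card / Inst.card : ℝ) := by
    apply tsum_eq_sum
    intro t ht
    rw [hzero t ht]
    simp
  have hcards : ∑ t ∈ S, (Inst.filter fun x => f x = t).card = Inst.card :=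
    (Finset.card_eq_sum_card_fiberwise (fun x hx => Finset.mem_image_of_mem f hx)).symm
  have hsump : ∑ t ∈ S, ((Inst.filter fun x => f x = t).card / Inst.card : ℝ) = 1 := by
    rw [← Finset.sum_div]
    rw [div_eq_one_iff_eq (ne_of_gt hNR), hN]
    exact_mod_cast congrArg (Nat.cast (R := ℝ)) hcards
  have hclaim : ∀ t ∈ S, ((Inst.filter fun x => f x = t).card / Inst.card : ℝ) * c ≤
      -(((Inst.filter fun x => f x = t).card / Inst.card : ℝ) *
        Real.logb 2 ((Inst.filter fun x => f x = t).card / Inst.card : ℝ)) := by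
    intro t _
    by_cases h0 : (Inst.filter fun x => f x = t).card = 0
    · rw [h0]; simp
    · have hpt : (0:ℝ) < ((Inst.filter fun x => f x = t).card / Inst.card : ℝ) := by
        apply div_pos _ hNR
        exact_mod_cast Nat.pos_of_ne_zero h0
      have hple : ((Inst.filter fun x => f x = t).card / Inst.card : ℝ) ≤ M / N :=
        (div_le_div_iff_of_pos_right hNR).2 (hup t)
      have hlog : Real.logb 2 ((Inst.filter fun x => f x = t).card / Inst.card : ℝ)
          ≤ Real.logb 2 (M / N) := Real.logb_le_logb_of_le one_lt_two hpt hple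
      have hMN : Real.logb 2 (M / N) = -c := by
        rw [hc, ← Real.logb_inv]
        congr 1
        rw [inv_div]
      rw [hMN] at hlog
      have := mul_le_mul_of_nonneg_left hlog (le_of_lt hpt)
      linarith
  have hcle : c ≤ -∑ t ∈ S, ((Inst.filter fun x => f x = t).card / Inst.card : ℝ) *
      Real.logb 2 ((Inst.filter fun x => f x = t).card / Inst.card : ℝ) := by
    have h1 : c = ∑ t ∈ S, ((Inst.filter fun x => f x = t).card / Inst.card : ℝ) * c := by
      rw [← Finset.sum_mul, hsump, one_mul]
    rw [h1, ← Finset.sum_neg_distrib]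
    exact Finset.sum_le_sum hclaim
  -- target ≤ c
  have htarget : (k : ℝ) * Real.logb 2 b - Real.logb 2 ((n : ℝ) ^ k / (n.descFactorial k : ℝ)) ≤ c := by
    have e1 : (k : ℝ) * Real.logb 2 b = Real.logb 2 ((b:ℝ) ^ k) := (Real.logb_pow 2 b k).symm
    have e2 : Real.logb 2 ((b:ℝ) ^ k) - Real.logb 2 ((n : ℝ) ^ k / (n.descFactorial k : ℝ))
        = Real.logb 2 (((b:ℝ) ^ k) / ((n : ℝ) ^ k / (n.descFactorial k : ℝ))) :=
      (Real.logb_div (by positivity) (by positivity)).symm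
    rw [e1, e2, hc]
    apply Real.logb_le_logb_of_le one_lt_two (by positivity)
    -- (b^k)/(n^k/desc) ≤ N / M
    have hNM0 : ((n.choose k * b.descFactorial k : ℕ) : ℝ) / M
        = ((b:ℝ) ^ k) / ((n : ℝ) ^ k / (n.descFactorial k : ℝ)) := by
      have hd1 : (n.descFactorial k : ℝ) = (k.factorial : ℝ) * (n.choose k : ℝ) := by
        exact_mod_cast congrArg (Nat.cast (R := ℝ)) (Nat.descFactorial_eq_factorial_mul_choose n k)
      have hd2 : (b.descFactorial k : ℝ) = (k.factorial : ℝ) * (b.choose k : ℝ) := by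
        exact_mod_cast congrArg (Nat.cast (R := ℝ)) (Nat.descFactorial_eq_factorial_mul_choose b k)
      rw [hM]
      push_cast
      rw [hd1, hd2]
      have hcbk : ((b.choose k : ℕ) : ℝ) ≠ 0 := Nat.cast_ne_zero.2 hchoosebk.ne'
      field_simp
      have hbk : ((b:ℝ))^k ≠ 0 := by positivity
      rw [div_pow, mul_assoc, div_mul_cancel₀ _ hbk]
    rw [← hNM0]
    exact (div_le_div_iff_of_pos_right hMpos).2 (by rw [hN]; exact_mod_cast hlow)
  calc (k : ℝ) * Real.logb 2 b - Real.logb 2 ((n : ℝ) ^ k / (n.descFactorial k : ℝ))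
      ≤ c := htarget
    _ ≤ -∑ t ∈ S, ((Inst.filter fun x => f x = t).card / Inst.card : ℝ) *
        Real.logb 2 ((Inst.filter fun x => f x = t).card / Inst.card : ℝ) := hcle
    _ = -∑' t : ℕ, ((Inst.filter fun x => f x = t).card / Inst.card : ℝ) *
        Real.logb 2 ((Inst.filter fun x => f x = t).card / Inst.card : ℝ) := by rw [htsum]
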